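/- arXiv:1309.6186 — 3 statements merged into one kernel-verified Lean document; each statement's English description precedes it below -/
import Mathlib

section
/- Let O_K be a discrete valuation ring with uniformizer π, let n > m ≥ 0, and let M = O_K^r ⊕ ⊕_{j=1}^s O_K/π^{m_j} with all m_j ≤ m. Then every element of Hom_{O_K}(M, O_K/π^n) is the sum of (the reduction of) an element of Hom_{O_K}(M, O_K) and an element of Hom_{O_K}(M, π^{n-m}O_K/π^n); equivalently, Hom(M, O_K/π^n) = Im[Hom(M,O_K) → Hom(M, O_K/π^n)] + Hom(M, O_K/π^n)[π^m]. -/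
open scoped BigOperators

theorem stmt_14 {O : Type*} [CommRing O] [IsDomain O] [IsDiscreteValuationRing O]
    (π : O) (hπ : Irreducible π)
    (m n : ℕ) (hmn : m < n)
    (r s : ℕ) (mj : Fin s → ℕ) (hmj : ∀ j, mj j ≤ m)
    (φ : ((Fin r → O) × Π j : Fin s, O ⧸ Ideal.span {π ^ mj j}) →ₗ[O]
      O ⧸ Ideal.span {π ^ n}) :
    ∃ (ψ : ((Fin r → O) × Π j : Fin s, O ⧸ Ideal.span {π ^ mj j}) →ₗ[O] O)
      (τ : ((Fin r → O) × Π j : Fin s, O ⧸ Ideal.span {π ^ mj j}) →ₗ[O]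
        O ⧸ Ideal.span {π ^ n}),
      φ = (Ideal.span {π ^ n} : Ideal O).mkQ ∘ₗ ψ + τ ∧ π ^ m • τ = 0 := by
  have I : Ideal O := Ideal.span {π ^ n}
  -- restriction of φ to the free part
  set L : (Fin r → O) →ₗ[O] O ⧸ Ideal.span {π ^ n} := φ ∘ₗ LinearMap.inl O _ _ with hL
  -- choose lifts of L on the standard basis
  choose a ha using fun i : Fin r => Ideal.Quotient.mk_surjective (I := Ideal.span {π ^ n})
    (L (Pi.basisFun O (Fin r) i))
  set ψ0 : (Fin r → O) →ₗ[O] O := (Pi.basisFun O (Fin r)).constr O a with hψ0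
  have hlift : (Ideal.span {π ^ n} : Ideal O).mkQ ∘ₗ ψ0 = L := by
    apply (Pi.basisFun O (Fin r)).ext
    intro i
    simp [hψ0, ha i, Pi.single_apply, Finset.sum_ite_eq]
  refine ⟨ψ0 ∘ₗ LinearMap.fst O _ _, φ - (Ideal.span {π ^ n} : Ideal O).mkQ ∘ₗ (ψ0 ∘ₗ LinearMap.fst O _ _), (add_sub_cancel _ _).symm, ?_⟩
  apply LinearMap.ext
  rintro ⟨x1, x2⟩
  have h1 : ((Ideal.span {π ^ n} : Ideal O).mkQ ∘ₗ (ψ0 ∘ₗ LinearMap.fst O _ _)) (x1, x2) = φ (x1, 0) := by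
    have := congrArg (fun f => f x1) hlift
    simpa [hL] using this
  have h2 : π ^ m • (x2 : Π j : Fin s, O ⧸ Ideal.span {π ^ mj j}) = 0 := by
    funext j
    obtain ⟨z, hz⟩ := Ideal.Quotient.mk_surjective (x2 j)
    have : π ^ m • x2 j = Ideal.Quotient.mk _ (π ^ m * z) := by
      rw [← hz]; rfl
    rw [Pi.smul_apply, this, Pi.zero_apply, Ideal.Quotient.eq_zero_iff_mem,
      Ideal.mem_span_singleton]
    exact Dvd.dvd.mul_right (pow_dvd_pow π (hmj j)) z
  have key : π ^ m • φ (x1, x2) = π ^ m • φ (x1, 0) := by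
    rw [← map_smul, ← map_smul]
    congr 1
    simp [Prod.smul_mk, h2]
  simp only [LinearMap.smul_apply, LinearMap.sub_apply, LinearMap.zero_apply,
    smul_sub, h1, key, sub_self]
end

section
/- Let A be a Noetherian one-dimensional local integral domain whose normalization Ã is finite over A (e.g. A Henselian excellent). Let f: X' → X = Spec A be the blow-up of X at the closed point. Then f is a finite morphism, and f is an isomorphism if and only if A is normal (i.e. integrally closed in its fraction field). -/
open scoped BigOperators

set_option synthInstance.maxHeartbeats 1000000

set_option maxHeartbeats 1000000 in
theorem stmt_17 (A : Type*) [CommRing A] [IsDomain A] [IsNoetherianRing A]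
    [HenselianLocalRing A] [Ring.DimensionLEOne A] (hnf : ¬ IsField A)
    [Module.Finite A (integralClosure A (FractionRing A))]
    (D : Subalgebra A (FractionRing A))
    -- `D` is the coordinate ring of the blow-up of `Spec A` at the closed point
    (hD : ∀ z : FractionRing A, z ∈ D ↔ ∃ n : ℕ, 0 < n ∧
      ∀ x ∈ (IsLocalRing.maximalIdeal A) ^ n, ∃ w ∈ (IsLocalRing.maximalIdeal A) ^ n,
        z * algebraMap A (FractionRing A) x = algebraMap A (FractionRing A) w) :
    Module.Finite A D ∧ (D = ⊥ ↔ IsIntegrallyClosed A) := by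
  classical
  set K := FractionRing A with hKdef
  set m : Ideal A := IsLocalRing.maximalIdeal A with hmdef
  have hφ : Function.Injective (algebraMap A K) := IsFractionRing.injective A K
  have hmne : m ≠ ⊥ := fun h => hnf (IsLocalRing.isField_iff_maximalIdeal_eq.mpr h)
  obtain ⟨a, ham, ha0⟩ := (Submodule.ne_bot_iff m).mp hmne
  have hφa : algebraMap A K a ≠ 0 := fun h => ha0 (hφ (by simpa using h))
  -- every element of D is integral over A
  have key : ∀ z ∈ D, IsIntegral A z := by
    intro z hz
    obtain ⟨n, hn0, h⟩ := (hD z).mp hz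
    set N : Submodule A K := Submodule.map (Algebra.linearMap A K) (m ^ n : Ideal A) with hN
    have hNbot : N ≠ ⊥ := by
      intro hNb
      have h1 : algebraMap A K (a ^ n) ∈ N :=
        ⟨a ^ n, Ideal.pow_mem_pow ham n, rfl⟩
      rw [hNb, Submodule.mem_bot] at h1
      exact pow_ne_zero n ha0 (hφ (by simpa using h1))
    have hNfg : N.FG := (IsNoetherian.noetherian (m ^ n : Ideal A)).map _
    refine isIntegral_of_smul_mem_submodule N hNbot hNfg z ?_
    rintro _ ⟨x, hx, rfl⟩
    obtain ⟨w, hw, hw'⟩ := h x hx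
    exact ⟨w, hw, by simpa [smul_eq_mul] using hw'.symm⟩
  have hDle : Subalgebra.toSubmodule D ≤
      Subalgebra.toSubmodule (integralClosure A K) := by
    intro z hz
    exact key z hz
  constructor
  · -- finiteness
    have hTfg : (Subalgebra.toSubmodule (integralClosure A K)).FG :=
      Module.Finite.iff_fg.mp ‹Module.Finite A (integralClosure A (FractionRing A))›
    have hnoeth : IsNoetherian A (Subalgebra.toSubmodule (integralClosure A K)) :=
      isNoetherian_of_fg_of_noetherian _ hTfg
    have heq : Subalgebra.toSubmodule D =
        Submodule.map (Subalgebra.toSubmodule (integralClosure A K)).subtype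
          (Submodule.comap (Subalgebra.toSubmodule (integralClosure A K)).subtype
            (Subalgebra.toSubmodule D)) := by
      rw [Submodule.map_comap_subtype, inf_eq_right.mpr hDle]
    have hfg : (Subalgebra.toSubmodule D).FG := by
      rw [heq]
      exact (IsNoetherian.noetherian _).map _
    exact Module.Finite.iff_fg.mpr hfg
  constructor
  · -- D = ⊥ → integrally closed
    intro hDbot
    -- m ≤ radical (span {a})
    have hrad : m ≤ (Ideal.span {a}).radical := by
      rw [Ideal.radical_eq_sInf]
      intro x hx
      rw [Submodule.mem_sInf]
      rintro p ⟨hp1, hp2⟩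
      have hpne : p ≠ ⊥ := by
        intro hb
        have : a ∈ p := hp1 (Ideal.subset_span rfl)
        rw [hb, Submodule.mem_bot] at this
        exact ha0 this
      have hpm := Ring.DimensionLEOne.maximalOfPrime hpne hp2
      rw [IsLocalRing.eq_maximalIdeal hpm]
      exact hx
    have hex : ∃ k : ℕ, m ^ k ≤ Ideal.span {a} :=
      Ideal.exists_pow_le_of_le_radical_of_fg hrad (IsNoetherian.noetherian m)
    set k := Nat.find hex with hkdef
    have hk : m ^ k ≤ Ideal.span {a} := Nat.find_spec hex
    have hkpos : 0 < k := by
      rcases Nat.eq_zero_or_pos k with h0 | h0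
      · exfalso
        rw [h0, pow_zero, Ideal.one_eq_top] at hk
        have h1 : (1 : A) ∈ Ideal.span ({a} : Set A) := hk Submodule.mem_top
        obtain ⟨c, hc⟩ := Ideal.mem_span_singleton'.mp h1
        have : IsUnit a := IsUnit.of_mul_eq_one c (by linear_combination hc)
        exact (IsLocalRing.mem_maximalIdeal a).mp ham this
      · exact h0
    -- pick b ∈ m^(k-1) \ (a)
    have hkm : ¬ m ^ (k - 1) ≤ Ideal.span {a} := Nat.find_min hex (by omega)
    obtain ⟨b, hbm, hbs⟩ := Set.not_subset.mp hkm
    -- for x ∈ m, b * x ∈ m ^ k ⊆ (a)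
    have hbx : ∀ x ∈ m, ∃ c : A, b * x = a * c := by
      intro x hx
      have : b * x ∈ m ^ k := by
        have : b * x ∈ m ^ (k - 1) * m := Ideal.mul_mem_mul hbm hx
        rwa [← pow_succ, Nat.sub_add_cancel hkpos] at this
      obtain ⟨c, hc⟩ := Ideal.mem_span_singleton'.mp (hk this)
      exact ⟨c, by linear_combination -hc⟩
    by_cases hcase : ∀ x ∈ m, ∀ c : A, b * x = a * c → c ∈ m
    · -- then z = b/a lies in D = A, contradiction
      exfalso
      set z : K := algebraMap A K b / algebraMap A K a with hz
      have hzD : z ∈ D := by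
        rw [hD]
        refine ⟨1, one_pos, ?_⟩
        intro x hx
        rw [pow_one] at hx ⊢
        obtain ⟨c, hc⟩ := hbx x hx
        refine ⟨c, hcase x hx c hc, ?_⟩
        rw [hz, div_mul_eq_mul_div, div_eq_iff hφa, ← map_mul, ← map_mul]
        exact congrArg _ (by rw [hc, mul_comm])
      rw [hDbot, Algebra.mem_bot] at hzD
      obtain ⟨y, hy⟩ := hzD
      apply hbs
      rw [SetLike.mem_coe, Ideal.mem_span_singleton']
      refine ⟨y, hφ ?_⟩
      rw [map_mul]
      rw [eq_div_iff hφa] at hy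
      exact hy
    · -- then m is principal, so A is a DVR
      push_neg at hcase
      obtain ⟨x₀, hx₀m, c₀, hc₀, hc₀m⟩ := hcase
      have hc₀u : IsUnit c₀ := by
        by_contra h
        exact hc₀m ((IsLocalRing.mem_maximalIdeal c₀).mpr h)
      have hmeq : m = Ideal.span {x₀} := by
        apply le_antisymm
        · intro x hx
          obtain ⟨c, hc⟩ := hbx x hx
          rw [Ideal.mem_span_singleton']
          obtain ⟨u, hu⟩ := hc₀u.exists_left_inv
          refine ⟨u * c, ?_⟩
          have h1 : a * (c * x₀) = a * (c₀ * x) := by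
            have e1 : b * x * x₀ = a * c * x₀ := by rw [hc]
            have e2 : b * x₀ * x = a * c₀ * x := by rw [hc₀]
            linear_combination e2 - e1
          have h2 : c * x₀ = c₀ * x := mul_left_cancel₀ ha0 h1
          calc u * c * x₀ = u * (c * x₀) := by ring
            _ = u * (c₀ * x) := by rw [h2]
            _ = (u * c₀) * x := by ring
            _ = x := by rw [hu, one_mul]
        · rw [Ideal.span_le, Set.singleton_subset_iff]
          exact hx₀m
      have hprinc : (IsLocalRing.maximalIdeal A).IsPrincipal := ⟨⟨x₀, hmeq⟩⟩
      have h34 := (IsDiscreteValuationRing.TFAE A hnf).out 3 4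
      exact (h34.mpr hprinc).1
  · -- integrally closed → D = ⊥
    intro hIC
    apply le_antisymm
    · intro z hz
      obtain ⟨y, hy⟩ := IsIntegrallyClosed.isIntegral_iff.mp (key z hz)
      exact Algebra.mem_bot.mpr ⟨y, hy⟩
    · exact bot_le
end

section
/- Let A be a Noetherian one-dimensional Henselian local integral domain with finite normalization. Define A_0 = A and let A_{i+1} be (the coordinate ring of) the blow-up of Spec A_i at its closed point. Then the sequence A_0 ⊆ A_1 ⊆ A_2 ⊆ ... stabilizes after finitely many steps, and its stable value equals the normalization Ã of A. -/
open scoped BigOperators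

set_option linter.unusedSectionVars false

set_option synthInstance.maxHeartbeats 1000000
set_option maxHeartbeats 1000000

/-- `IsClosedPointBlowup C D` says that the subalgebra `D` of the fraction field `K`
is the coordinate ring of the blow-up of `Spec C` at its closed point (the set of
nonunits of `C`, which is required to be an ideal, i.e. `C` is local). -/
def IsClosedPointBlowup {A K : Type*} [CommRing A] [Field K] [Algebra A K]
    (C D : Subalgebra A K) : Prop :=
  ∃ J : Ideal C, (∀ x : C, x ∈ J ↔ ¬ IsUnit x) ∧
    ∀ z : K, z ∈ D ↔ ∃ n : ℕ, 0 < n ∧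
      ∀ x ∈ J ^ n, ∃ w ∈ J ^ n, z * (x : K) = (w : K)

section Aux

variable {A K : Type*} [CommRing A] [IsDomain A] [IsNoetherianRing A]
  [Ring.DimensionLEOne A] [Field K] [Algebra A K] [IsFractionRing A K]

/-- Any subalgebra of the fraction field of `A` containing `A` has `K` as its
fraction field. -/
theorem aux_isFractionRing (C : Subalgebra A K) : IsFractionRing (↥C) K where
  map_units := by
    rintro ⟨y, hy⟩
    have hy0 : (y : K) ≠ 0 := by
      intro h
      have : y = 0 := Subtype.ext h
      subst this
      exact (nonZeroDivisors.ne_zero hy) rfl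
    exact IsUnit.mk0 _ hy0
  surj := by
    intro z
    obtain ⟨a, b, hb, he⟩ := IsFractionRing.div_surjective (A := A) z
    have hbK : algebraMap A K b ≠ 0 :=
      IsFractionRing.to_map_ne_zero_of_mem_nonZeroDivisors hb
    have hbC : algebraMap A (↥C) b ≠ 0 := by
      intro h
      apply hbK
      rw [IsScalarTower.algebraMap_apply A (↥C) K, h, map_zero]
    refine ⟨⟨algebraMap A (↥C) a, ⟨algebraMap A (↥C) b,
      mem_nonZeroDivisors_of_ne_zero hbC⟩⟩, ?_⟩
    have h1 : algebraMap (↥C) K (algebraMap A (↥C) a) = algebraMap A K a :=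
      (IsScalarTower.algebraMap_apply A (↥C) K a).symm
    have h2 : algebraMap (↥C) K (algebraMap A (↥C) b) = algebraMap A K b :=
      (IsScalarTower.algebraMap_apply A (↥C) K b).symm
    simp only [h1, h2]
    rw [← he, div_mul_cancel₀ _ hbK]
  exists_of_eq := by
    intro x y h
    refine ⟨1, ?_⟩
    have : x = y := Subtype.ext h
    rw [this]

variable (hnf : ¬ IsField A)

theorem aux_isNoetherianModule [Module.Finite A (integralClosure A K)]
    (C : Subalgebra A K) (hC : C ≤ integralClosure A K) : IsNoetherian A ↥C := by
  haveI : IsNoetherian A ↥(integralClosure A K) :=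
    isNoetherian_of_isNoetherianRing_of_finite A _
  exact isNoetherian_of_injective (Subalgebra.inclusion hC).toLinearMap
    (Subalgebra.inclusion_injective hC)

theorem aux_isIntegral (C : Subalgebra A K) (hC : C ≤ integralClosure A K) :
    Algebra.IsIntegral A ↥C := by
  refine ⟨fun x => ?_⟩
  have hx : IsIntegral A (x : K) := hC x.2
  exact (isIntegral_algHom_iff C.val Subtype.val_injective).mp hx

theorem aux_injective (C : Subalgebra A K) :
    Function.Injective (algebraMap A ↥C) := by
  intro a b h
  apply IsFractionRing.injective A K
  rw [IsScalarTower.algebraMap_apply A (↥C) K, h,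
    ← IsScalarTower.algebraMap_apply A (↥C) K]

include hnf in
theorem aux_notField (C : Subalgebra A K) (hC : C ≤ integralClosure A K) :
    ¬ IsField ↥C := by
  haveI := aux_isIntegral C hC
  intro h
  exact hnf ((Algebra.IsIntegral.isField_iff_isField (aux_injective C)).mpr h)

include hnf in
/-- The blow-up of the closed point contains `C` and is contained in the
integral closure of `A`. -/
theorem aux_le_and_le [Module.Finite A (integralClosure A K)]
    (C D : Subalgebra A K) (hC : C ≤ integralClosure A K)
    (h : IsClosedPointBlowup C D) :
    C ≤ D ∧ D ≤ integralClosure A K := by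
  obtain ⟨J, hJ, hD⟩ := h
  constructor
  · intro z hz
    rw [hD]
    refine ⟨1, one_pos, fun x hx => ?_⟩
    rw [pow_one] at hx ⊢
    exact ⟨⟨z, hz⟩ * x, J.mul_mem_left _ hx, rfl⟩
  · intro z hz
    rw [hD] at hz
    obtain ⟨n, hn, hstab⟩ := hz
    haveI hno : IsNoetherian A ↥C := aux_isNoetherianModule C hC
    have hCf : ¬ IsField ↥C := aux_notField hnf C hC
    obtain ⟨x, hx0, hxu⟩ : ∃ x : ↥C, x ≠ 0 ∧ ¬ IsUnit x := by
      by_contra hcon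
      push_neg at hcon
      apply hCf
      refine ⟨⟨0, 1, zero_ne_one⟩, mul_comm, fun {a} ha => ?_⟩
      exact (hcon a ha).exists_right_inv
    set N : Submodule A K :=
      Submodule.map (C.val.toLinearMap) ((J ^ n).restrictScalars A) with hN
    have hNfg : N.FG := Submodule.FG.map _ (IsNoetherian.noetherian _)
    have hNne : N ≠ ⊥ := by
      rw [Submodule.ne_bot_iff]
      refine ⟨(x : K) ^ n, ⟨x ^ n, ?_, by simp⟩, ?_⟩
      · exact Ideal.pow_mem_pow ((hJ x).mpr hxu) n
      · apply pow_ne_zero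
        intro h
        exact hx0 (Subtype.ext h)
    have hsmul : ∀ k ∈ N, z • k ∈ N := by
      rintro k ⟨w, hw, rfl⟩
      obtain ⟨w', hw', hzw⟩ := hstab w hw
      exact ⟨w', hw', by rw [smul_eq_mul]; exact hzw.symm⟩
    exact isIntegral_of_smul_mem_submodule N hNne hNfg z hsmul

include hnf in
/-- If the blow-up of the closed point of `C` is `C` itself, then `C` is the
whole integral closure. -/
theorem aux_eq_of_blowup_self [Module.Finite A (integralClosure A K)]
    (C : Subalgebra A K) (hC : C ≤ integralClosure A K)
    (h : IsClosedPointBlowup C C) :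
    C = integralClosure A K := by
  classical
  obtain ⟨J, hJ, hD⟩ := h
  haveI hno : IsNoetherian A ↥C := aux_isNoetherianModule C hC
  haveI : IsNoetherianRing ↥C := isNoetherianRing_iff.mpr (isNoetherian_of_tower A hno)
  haveI : Algebra.IsIntegral A ↥C := aux_isIntegral C hC
  have hCf : ¬ IsField ↥C := aux_notField hnf C hC
  haveI : IsLocalRing ↥C := by
    refine IsLocalRing.of_nonunits_add fun a b ha hb => ?_
    have haJ : a ∈ J := (hJ a).mpr ha
    have hbJ : b ∈ J := (hJ b).mpr hb
    exact (hJ (a + b)).mp (J.add_mem haJ hbJ)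
  have hJmax : J = IsLocalRing.maximalIdeal ↥C := by
    ext t
    rw [IsLocalRing.mem_maximalIdeal, mem_nonunits_iff, hJ]
  haveI : Ring.DimensionLEOne ↥C := by
    refine ⟨fun {p} hp hprime => ?_⟩
    haveI := hprime
    obtain ⟨t, htp, ht0⟩ := Submodule.exists_mem_ne_zero_of_ne_bot hp
    have h1 : p.comap (algebraMap A ↥C) ≠ ⊥ :=
      Ideal.comap_ne_bot_of_integral_mem ht0 htp (Algebra.IsIntegral.isIntegral t)
    have h2 : (p.comap (algebraMap A ↥C)).IsMaximal :=
      (Ideal.IsPrime.comap _).isMaximal h1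
    exact Ideal.isMaximal_of_isIntegral_of_isMaximal_comap p h2
  have hJbot : J ≠ ⊥ := by
    rw [hJmax]
    exact fun e => hCf (IsLocalRing.isField_iff_maximalIdeal_eq.mpr e)
  obtain ⟨x, hxJ, hx0⟩ := Submodule.exists_mem_ne_zero_of_ne_bot hJbot
  have hxK : (x : K) ≠ 0 := fun e => hx0 (Subtype.ext e)
  -- some power of J is contained in (x)
  have hrad : J ≤ (Ideal.span {x}).radical := by
    intro y hy
    rw [Ideal.radical_eq_sInf]
    refine Ideal.mem_sInf.mpr ?_
    rintro P ⟨hxP, hP⟩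
    haveI := hP
    have hPb : P ≠ ⊥ := by
      intro e
      apply hx0
      have : x ∈ P := hxP (Ideal.mem_span_singleton_self x)
      rw [e] at this
      exact (Submodule.mem_bot _).mp this
    have hPm : P.IsMaximal := hP.isMaximal hPb
    have : P = IsLocalRing.maximalIdeal ↥C := IsLocalRing.eq_maximalIdeal hPm
    rw [this, ← hJmax]
    exact hy
  have hpow : ∃ n : ℕ, J ^ n ≤ Ideal.span {x} := by
    obtain ⟨k, hk⟩ := Ideal.exists_radical_pow_le_of_fg (Ideal.span {x})
      (IsNoetherian.noetherian _)
    exact ⟨k, le_trans (Ideal.pow_right_mono hrad k) hk⟩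
  have hfind : J ^ (Nat.find hpow) ≤ Ideal.span {x} := Nat.find_spec hpow
  have hn0ne : Nat.find hpow ≠ 0 := by
    intro e
    rw [e, pow_zero, Ideal.one_eq_top] at hfind
    have h1 : (1 : ↥C) ∈ Ideal.span {x} := hfind Submodule.mem_top
    have : IsUnit x := isUnit_of_dvd_one (Ideal.mem_span_singleton.mp h1)
    exact (hJ x).mp hxJ this
  obtain ⟨m, hm⟩ := Nat.exists_eq_succ_of_ne_zero hn0ne
  have hmlt : ¬ (J ^ m ≤ Ideal.span {x}) :=
    Nat.find_min hpow (by omega)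
  obtain ⟨y, hyJ, hyx⟩ := SetLike.not_le_iff_exists.mp hmlt
  set z : K := (y : K) / (x : K) with hz
  have hzx : z * (x : K) = (y : K) := div_mul_cancel₀ _ hxK
  have hzC : z ∉ C := by
    intro hzc
    apply hyx
    refine Ideal.mem_span_singleton'.mpr ⟨⟨z, hzc⟩, ?_⟩
    refine Subtype.ext ?_
    push_cast
    exact hzx
  have key : ∀ a : ↥C, a ∈ J → ∃ c : ↥C, (c : K) = z * (a : K) := by
    intro a haJ
    have h1 : y * a ∈ J ^ Nat.find hpow := by
      rw [hm, pow_succ]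
      exact Ideal.mul_mem_mul hyJ haJ
    obtain ⟨c, hc⟩ := Ideal.mem_span_singleton'.mp (hfind h1)
    refine ⟨c, ?_⟩
    have hcK : (c : K) * (x : K) = (y : K) * (a : K) := by
      have := congrArg (Subtype.val) hc
      push_cast at this
      exact this
    rw [hz, div_mul_eq_mul_div, eq_div_iff hxK]
    exact hcK
  have hprin : (IsLocalRing.maximalIdeal ↥C).IsPrincipal := by
    by_cases hcase : ∀ a ∈ J, ∃ w ∈ J, z * (a : K) = (w : K)
    · exfalso
      apply hzC
      rw [hD]
      refine ⟨1, one_pos, fun b hb => ?_⟩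
      rw [pow_one] at hb
      obtain ⟨w, hw, hzw⟩ := hcase b hb
      exact ⟨w, by rw [pow_one]; exact hw, hzw⟩
    · push_neg at hcase
      obtain ⟨a, haJ, hna⟩ := hcase
      obtain ⟨c, hc⟩ := key a haJ
      have hcJ : c ∉ J := fun hcJ => hna c hcJ hc.symm
      have hcu : IsUnit c := by
        by_contra hcnu
        exact hcJ ((hJ c).mpr hcnu)
      rw [← hJmax]
      refine ⟨⟨a, ?_⟩⟩
      apply le_antisymm
      · intro b hbJ
        obtain ⟨d, hd⟩ := key b hbJ
        have hcb : c * b = d * a := by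
          refine Subtype.ext ?_
          push_cast
          rw [hc, hd]
          ring
        refine Ideal.mem_span_singleton'.mpr ⟨(hcu.unit⁻¹ : Units ↥C) * d, ?_⟩
        calc ((hcu.unit⁻¹ : Units ↥C) : ↥C) * d * a
            = ((hcu.unit⁻¹ : Units ↥C) : ↥C) * (d * a) := by ring
          _ = ((hcu.unit⁻¹ : Units ↥C) : ↥C) * (c * b) := by rw [hcb]
          _ = (((hcu.unit⁻¹ : Units ↥C) : ↥C) * c) * b := by ring
          _ = b := by
              rw [hcu.val_inv_mul, one_mul]
      · rw [Submodule.span_le, Set.singleton_subset_iff]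
        exact haJ
  have htfae := tfae_of_isNoetherianRing_of_isLocalRing_of_isDomain (↥C)
  have h43 := htfae.out 4 3
  haveI : IsIntegrallyClosed ↥C := ((h43.mp hprin)).1
  haveI : IsFractionRing ↥C K := aux_isFractionRing C
  refine le_antisymm hC ?_
  intro w hw
  have hwA : IsIntegral A w := hw
  have hwi : IsIntegral (↥C) w := IsIntegral.tower_top hwA
  obtain ⟨c, hc⟩ := IsIntegrallyClosed.isIntegral_iff.mp hwi
  have : (c : K) = w := hc
  exact this ▸ c.2

end Aux

theorem stmt_18 (A : Type*) [CommRing A] [IsDomain A] [IsNoetherianRing A]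
    [HenselianLocalRing A] [Ring.DimensionLEOne A] (hnf : ¬ IsField A)
    [Module.Finite A (integralClosure A (FractionRing A))]
    (B : ℕ → Subalgebra A (FractionRing A)) (hB0 : B 0 = ⊥)
    (hstep : ∀ i : ℕ, IsClosedPointBlowup (B i) (B (i + 1))) :
    ∃ N : ℕ, (∀ i : ℕ, N ≤ i → B i = B N) ∧
      B N = integralClosure A (FractionRing A) := by
  set K := FractionRing A
  have hint : ∀ i, B i ≤ integralClosure A K := by
    intro i
    induction i with
    | zero => rw [hB0]; exact bot_le
    | succ n ih => exact (aux_le_and_le hnf (B n) (B (n + 1)) ih (hstep n)).2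
  have hsteple : ∀ i, B i ≤ B (i + 1) :=
    fun i => (aux_le_and_le hnf (B i) (B (i + 1)) (hint i) (hstep i)).1
  have hmono : Monotone B := monotone_nat_of_le_succ hsteple
  haveI : IsNoetherian A ↥(integralClosure A K) :=
    isNoetherian_of_isNoetherianRing_of_finite A _
  let T : ℕ →o Submodule A ↥(integralClosure A K) :=
    ⟨fun i => (Subalgebra.toSubmodule (B i)).comap
        (integralClosure A K).val.toLinearMap,
      fun i j hij => Submodule.comap_mono (by exact hmono hij)⟩
  obtain ⟨N, hN⟩ := monotone_stabilizes_iff_noetherian.mpr ‹_› T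
  have hBeq : ∀ i, N ≤ i → B i = B N := by
    intro i hi
    apply le_antisymm _ (hmono hi)
    intro zz hz
    have hz' : (⟨zz, hint i hz⟩ : ↥(integralClosure A K)) ∈ T i := by
      exact hz
    rw [← hN i hi] at hz'
    exact hz'
  refine ⟨N, hBeq, ?_⟩
  have hBN1 : B (N + 1) = B N := hBeq (N + 1) (Nat.le_succ N)
  have hself : IsClosedPointBlowup (B N) (B N) := hBN1 ▸ hstep N
  exact aux_eq_of_blowup_self hnf (B N) (hint N) hself
end
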